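/- If the normalized conditional distributions coincide for all x, y — i.e., p(y|x;θ_1) = p(y|x;θ_2) — then for all tuples (x, y_0, ..., y_K) and all i, the ranking softmax posteriors coincide: q(i|x, y_{0:K}; θ_1) = q(i|x, y_{0:K}; θ_2). -/

import Mathlib

/-- If the normalized conditional distributions coincide, then all the
ranking softmax posteriors coincide. -/
theorem cond_dist_eq_implies_softmax_posterior_eq (X Y : Type) [Fintype Y] (K : ℕ)
    (Θ : Type) (θ₁ θ₂ : Θ)
    (pN : Y → ℝ) (hpN : ∀ y, 0 < pN y)
    (s : X → Y → Θ → ℝ)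
    (sb : X → Y → Θ → ℝ) (hsb : ∀ x y θ, sb x y θ = s x y θ - Real.log (pN y))
    (hp : ∀ x y, Real.exp (s x y θ₁) / (∑ y', Real.exp (s x y' θ₁))
      = Real.exp (s x y θ₂) / (∑ y', Real.exp (s x y' θ₂))) :
    ∀ (x : X) (ys : Fin (K + 1) → Y) (i : Fin (K + 1)),
      Real.exp (sb x (ys i) θ₁) / (∑ j, Real.exp (sb x (ys j) θ₁))
        = Real.exp (sb x (ys i) θ₂) / (∑ j, Real.exp (sb x (ys j) θ₂)) := by
  intro x ys i
  set Z₁ : ℝ := ∑ y', Real.exp (s x y' θ₁) with hZ1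
  set Z₂ : ℝ := ∑ y', Real.exp (s x y' θ₂) with hZ2
  have hZ1pos : 0 < Z₁ := Finset.sum_pos (fun y _ => Real.exp_pos _) ⟨ys i, Finset.mem_univ _⟩
  have hZ2pos : 0 < Z₂ := Finset.sum_pos (fun y _ => Real.exp_pos _) ⟨ys i, Finset.mem_univ _⟩
  set c : ℝ := Z₁ / Z₂ with hc
  have hcpos : 0 < c := div_pos hZ1pos hZ2pos
  have key : ∀ y, Real.exp (sb x y θ₁) = c * Real.exp (sb x y θ₂) := by
    intro y
    have h := hp x y
    have h1 : Real.exp (s x y θ₁) = c * Real.exp (s x y θ₂) := by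
      field_simp [hc] at h ⊢
      rw [← hZ1, ← hZ2, div_eq_div_iff hZ1pos.ne' hZ2pos.ne'] at h
      rw [hc, mul_div_assoc', eq_div_iff hZ2pos.ne']
      linarith [h]
    rw [hsb, hsb, Real.exp_sub, Real.exp_sub, h1]
    ring
  have hsum : (∑ j, Real.exp (sb x (ys j) θ₁)) = c * ∑ j, Real.exp (sb x (ys j) θ₂) := by
    rw [Finset.mul_sum]; exact Finset.sum_congr rfl fun j _ => key (ys j)
  rw [key (ys i), hsum, mul_div_mul_left _ _ (ne_of_gt hcpos)]
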